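/- arXiv:2507.00581 — 2 statements merged into one kernel-verified Lean document; each statement's English description precedes it below -/
import Mathlib

section
/- Let μ and ν be compactly supported Borel probability measures on ℝ^d such that the intersection supp μ ∩ supp ν of their closed supports has μ-measure zero and ν-measure zero. If a countable set Λ ⊆ ℝ^d is a tight-frame spectrum for the measure (1/2)(μ + ν) with constant A > 0, then Λ is a tight-frame spectrum for μ with constant 2A. -/
open MeasureTheory Metric Set ENNReal

noncomputable section

/-- Euclidean space ℝ^d. -/
abbrev Euc (d : ℕ) := EuclideanSpace ℝ (Fin d)

/-- The exponential `e^{-2πi l·x}`. -/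
noncomputable def fexp {d : ℕ} (l x : Euc d) : ℂ :=
  Complex.exp (-(2 * (Real.pi : ℂ) * Complex.I * ((inner ℝ l x : ℝ) : ℂ)))

/-- `Λ` is a tight-frame spectrum for `μ` with constant `A > 0`:
for every `f ∈ L²(μ)`, `∑_{λ∈Λ} |∫ f(x) e^{-2πi λ·x} dμ(x)|² = A ∫ |f|² dμ`. -/
def IsTightFrameSpectrum {d : ℕ} (μ : Measure (Euc d)) (Λ : Set (Euc d)) (A : ℝ) : Prop :=
  Λ.Countable ∧ 0 < A ∧
    ∀ f : Euc d → ℂ, MemLp f 2 μ →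
      ∑' l : Λ, ‖∫ x, f x * fexp (l : Euc d) x ∂μ‖ ^ 2 = A * ∫ x, ‖f x‖ ^ 2 ∂μ

/-- `μ` is tight-frame spectral: it admits a tight-frame spectrum with some constant `A > 0`. -/
def TightFrameSpectral {d : ℕ} (μ : Measure (Euc d)) : Prop :=
  ∃ Λ A, IsTightFrameSpectrum μ Λ A

/-- The segment measure `μ_{x₀,v}`: pushforward of Lebesgue measure on `[0,1]`
under `t ↦ x₀ + t • v`. -/
noncomputable def segMeasure (x0 v : Euc 2) : Measure (Euc 2) :=
  Measure.map (fun t : ℝ => x0 + t • v) (volume.restrict (Set.Icc (0:ℝ) 1))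

/-- `μ̃`: the pushforward of `μ` under `x ↦ -x`. -/
noncomputable def mneg {d : ℕ} (μ : Measure (Euc d)) : Measure (Euc d) :=
  Measure.map (fun x => -x) μ

/-- The convolution `μ * ν`: pushforward of `μ × ν` under `(x,y) ↦ x + y`. -/
noncomputable def mconv {d : ℕ} (μ ν : Measure (Euc d)) : Measure (Euc d) :=
  Measure.map (fun p : Euc d × Euc d => p.1 + p.2) (μ.prod ν)

/-- The Fourier transform `f̂(ξ) = ∫ f(x) e^{-2πi ξ·x} dx`. -/
noncomputable def ftFun {d : ℕ} (f : Euc d → ℂ) (ξ : Euc d) : ℂ :=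
  ∫ x, f x * fexp ξ x

/-- The closed support of a measure: points all of whose balls have positive measure. -/
def msupp {d : ℕ} (μ : Measure (Euc d)) : Set (Euc d) :=
  {x | ∀ r : ℝ, 0 < r → 0 < μ (Metric.ball x r)}

lemma fexp_norm {d : ℕ} (l x : Euc d) : ‖fexp l x‖ = 1 := by
  rw [fexp, Complex.norm_exp]
  norm_num [Complex.mul_re, Complex.mul_im]

lemma fexp_cont {d : ℕ} (l : Euc d) : Continuous (fexp l) := by
  unfold fexp
  exact Complex.continuous_exp.comp <| (continuous_const.mul <|
    Complex.continuous_ofReal.comp (continuous_const.inner continuous_id)).neg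

lemma msupp_compl_null {d : ℕ} (μ : Measure (Euc d)) : μ (msupp μ)ᶜ = 0 := by
  refine measure_null_of_locally_null _ fun x hx => ?_
  simp only [msupp, Set.mem_compl_iff, Set.mem_setOf_eq, not_forall] at hx
  obtain ⟨r, hr, h0⟩ := hx
  exact ⟨Metric.ball x r, mem_nhdsWithin_of_mem_nhds (Metric.ball_mem_nhds x hr),
    le_antisymm (le_of_not_gt h0) zero_le⟩

/-- If `supp μ ∩ supp ν` is null for both `μ` and `ν`, then any tight-frame spectrum
for `(1/2)(μ+ν)` with constant `A` is a tight-frame spectrum for `μ` with constant `2A`. -/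
theorem tight_frame_spectrum_restricts
    {d : ℕ} (μ ν : Measure (Euc d)) [IsProbabilityMeasure μ] [IsProbabilityMeasure ν]
    (hcμ : ∃ K : Set (Euc d), IsCompact K ∧ μ Kᶜ = 0)
    (hcν : ∃ K : Set (Euc d), IsCompact K ∧ ν Kᶜ = 0)
    (hμ0 : μ (msupp μ ∩ msupp ν) = 0) (hν0 : ν (msupp μ ∩ msupp ν) = 0)
    (Λ : Set (Euc d)) (A : ℝ)
    (hΛ : IsTightFrameSpectrum ((2 : ℝ≥0∞)⁻¹ • (μ + ν)) Λ A) :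
    IsTightFrameSpectrum μ Λ (2 * A) := by
  obtain ⟨hcnt, hA, hsum⟩ := hΛ
  refine ⟨hcnt, by positivity, fun f hf => ?_⟩
  set ρ : Measure (Euc d) := (2 : ℝ≥0∞)⁻¹ • (μ + ν) with hρ
  set S : Set (Euc d) := msupp ν with hS
  -- μ S = 0
  have hμS : μ S = 0 := by
    have hsub : S ⊆ (msupp μ ∩ S) ∪ (msupp μ)ᶜ := by
      intro x hx
      by_cases h : x ∈ msupp μ
      · exact Or.inl ⟨h, hx⟩
      · exact Or.inr h
    have := (measure_mono hsub).trans (measure_union_le (μ := μ) _ _)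
    rw [hμ0, msupp_compl_null μ, add_zero] at this
    exact le_antisymm this zero_le
  set g : Euc d → ℂ := Sᶜ.indicator f with hg
  have hgf : g =ᵐ[μ] f := by
    refine measure_mono_null (fun x hx => ?_) hμS
    simp only [Set.mem_setOf_eq] at hx ⊢
    by_contra hxS
    exact hx (by simp [hg, Set.indicator_of_mem, hxS])
  have hg0 : g =ᵐ[ν] 0 := by
    refine measure_mono_null (fun x hx => ?_) (msupp_compl_null ν)
    simp only [Set.mem_setOf_eq] at hx ⊢
    by_contra hxS
    simp only [Set.mem_compl_iff, not_not] at hxS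
    exact hx (by simp [hg, Set.indicator_of_notMem, hxS, hS])
  have hgμ : MemLp g 2 μ := hf.ae_eq hgf.symm
  have hgν : MemLp g 2 ν := (MemLp.zero (p := 2) (μ := ν)).ae_eq hg0.symm
  have hgadd : MemLp g 2 (μ + ν) := by
    refine (memLp_two_iff_integrable_sq_norm
      (hgμ.aestronglyMeasurable.add_measure hgν.aestronglyMeasurable)).mpr ?_
    exact ((memLp_two_iff_integrable_sq_norm hgμ.aestronglyMeasurable).mp hgμ).add_measure
      ((memLp_two_iff_integrable_sq_norm hgν.aestronglyMeasurable).mp hgν)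
  have hgρ : MemLp g 2 ρ := hgadd.smul_measure (by simp)
  have htoReal : ((2 : ℝ≥0∞)⁻¹).toReal = (2 : ℝ)⁻¹ := by
    rw [ENNReal.toReal_inv]; norm_num
  -- integrals of g * fexp
  have hfint : ∀ l : Euc d, Integrable (fun x => f x * fexp l x) μ := by
    intro l
    have := (hf.integrable one_le_two).bdd_mul (fexp_cont l).aestronglyMeasurable
      (c := 1) (ae_of_all _ fun x => le_of_eq (fexp_norm l x))
    simpa [mul_comm] using this
  have key : ∀ l : Euc d,
      ∫ x, g x * fexp l x ∂ρ = (2 : ℝ)⁻¹ • ∫ x, f x * fexp l x ∂μ := by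
    intro l
    have h1 : Integrable (fun x => g x * fexp l x) μ :=
      (hfint l).congr (hgf.symm.mono fun x hx => by simp only [hx])
    have h2 : (fun x => g x * fexp l x) =ᵐ[ν] 0 :=
      hg0.mono fun x hx => by simp [hx]
    have h2' : Integrable (fun x => g x * fexp l x) ν :=
      (integrable_zero _ _ _).congr h2.symm
    have h3 : ∫ x, g x * fexp l x ∂μ = ∫ x, f x * fexp l x ∂μ :=
      integral_congr_ae (hgf.mono fun x hx => by simp only [hx])
    rw [hρ, integral_smul_measure, integral_add_measure h1 h2',
      integral_eq_zero_of_ae h2, add_zero, h3, htoReal]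
  -- integral of ‖g‖²
  have hnint : Integrable (fun x => ‖f x‖ ^ 2) μ :=
    (memLp_two_iff_integrable_sq_norm hf.aestronglyMeasurable).mp hf
  have keyn : ∫ x, ‖g x‖ ^ 2 ∂ρ = (2 : ℝ)⁻¹ • ∫ x, ‖f x‖ ^ 2 ∂μ := by
    have h1 : Integrable (fun x => ‖g x‖ ^ 2) μ :=
      hnint.congr (hgf.symm.mono fun x hx => by simp only [hx])
    have h2 : (fun x => ‖g x‖ ^ 2) =ᵐ[ν] 0 :=
      hg0.mono fun x hx => by simp [hx]
    have h2' : Integrable (fun x => ‖g x‖ ^ 2) ν :=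
      (integrable_zero _ _ _).congr h2.symm
    have h3 : ∫ x, ‖g x‖ ^ 2 ∂μ = ∫ x, ‖f x‖ ^ 2 ∂μ :=
      integral_congr_ae (hgf.mono fun x hx => by simp only [hx])
    rw [hρ, integral_smul_measure, integral_add_measure h1 h2',
      integral_eq_zero_of_ae h2, add_zero, h3, htoReal]
  have hmain := hsum g hgρ
  have hterm : ∀ l : Λ, ‖∫ x, g x * fexp (l : Euc d) x ∂ρ‖ ^ 2
      = (4 : ℝ)⁻¹ * ‖∫ x, f x * fexp (l : Euc d) x ∂μ‖ ^ 2 := by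
    intro l
    rw [key (l : Euc d), norm_smul]
    rw [mul_pow]
    norm_num
  rw [tsum_congr hterm, tsum_mul_left, keyn] at hmain
  have : (4 : ℝ)⁻¹ * ∑' l : Λ, ‖∫ x, f x * fexp (l : Euc d) x ∂μ‖ ^ 2
      = A * ((2 : ℝ)⁻¹ * ∫ x, ‖f x‖ ^ 2 ∂μ) := by
    simpa [smul_eq_mul] using hmain
  linarith
end
end

section
/- Let μ = (1/3)(μ_{(0,0),(0,1)} + μ_{(0,1),(1,0)} + μ_{(1,1),(0,−1)}) be the normalized arc-length measure on the Π-shaped polygonal line consisting of the three segments joining (0,0) to (0,1), (0,1) to (1,1), and (1,1) to (1,0). Then μ is not tight-frame spectral. -/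
open MeasureTheory Metric Set ENNReal Filter
open scoped Real ComplexConjugate Topology

noncomputable section

/-- The point `(a, b)` of ℝ². -/
noncomputable def ptE (a b : ℝ) : Euc 2 := (WithLp.equiv 2 (Fin 2 → ℝ)).symm ![a, b]

def tPI : ℂ := -(2 * (Real.pi : ℂ) * Complex.I)
def ee (r : ℝ) : ℂ := Complex.exp (tPI * r)

noncomputable def muPi : Measure (Euc 2) :=
  (3 : ℝ≥0∞)⁻¹ • (segMeasure (ptE 0 0) (ptE 0 1) + segMeasure (ptE 0 1) (ptE 1 0) +
      segMeasure (ptE 1 1) (ptE 0 (-1)))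

lemma tPI_ne : tPI ≠ 0 := by
  unfold tPI
  simp [Real.pi_ne_zero, Complex.I_ne_zero, Complex.ofReal_ne_zero]

lemma conj_tPI : (starRingEnd ℂ) tPI = -tPI := by
  unfold tPI
  rw [map_neg, map_mul, map_mul, Complex.conj_I, Complex.conj_ofReal, map_ofNat]
  ring


lemma ee_add (a b : ℝ) : ee (a + b) = ee a * ee b := by
  unfold ee; rw [← Complex.exp_add]; push_cast; ring_nf

lemma ee_zero : ee 0 = 1 := by unfold ee; simp

lemma ee_mul_ee_neg (a : ℝ) : ee a * ee (-a) = 1 := by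
  rw [← ee_add]; simp [ee_zero]

lemma conj_ee (r : ℝ) : (starRingEnd ℂ) (ee r) = ee (-r) := by
  unfold ee
  rw [← Complex.exp_conj]
  congr 1
  rw [map_mul, conj_tPI, Complex.conj_ofReal]
  push_cast; ring

lemma ee_ne_zero (r : ℝ) : ee r ≠ 0 := Complex.exp_ne_zero _

lemma norm_ee (r : ℝ) : ‖ee r‖ = 1 := by
  unfold ee
  have : tPI * r = ((-(2 * Real.pi * r) : ℝ) : ℂ) * Complex.I := by
    unfold tPI; push_cast; ring
  rw [this, Complex.norm_exp_ofReal_mul_I]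

/-- `∫_0^δ e^{-2πipt} dt` -/
def Gp (p δ : ℝ) : ℂ := ∫ t in Icc (0:ℝ) δ, ee (p * t)

/-- `∫_{1-δ}^1 e^{-2πipt} dt` -/
def Gp' (p δ : ℝ) : ℂ := ∫ t in Icc (1-δ:ℝ) 1, ee (p * t)

/-- `∫_0^1 t e^{-2πiqt} dt` -/
def Jq (q : ℝ) : ℂ := ∫ t in Icc (0:ℝ) 1, (t:ℂ) * ee (q * t)

lemma setInt_Icc_eq_interval {f : ℝ → ℂ} {a b : ℝ} (h : a ≤ b) :
    ∫ t in Icc a b, f t = ∫ t in a..b, f t := by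
  rw [intervalIntegral.integral_of_le h, integral_Icc_eq_integral_Ioc]

lemma Gp_closed {p : ℝ} (hp : p ≠ 0) {δ : ℝ} (hδ : 0 ≤ δ) :
    Gp p δ = (ee (p * δ) - 1) / (tPI * p) := by
  have hc : tPI * (p:ℂ) ≠ 0 := mul_ne_zero tPI_ne (by exact_mod_cast hp)
  unfold Gp
  rw [setInt_Icc_eq_interval hδ]
  have : ∀ t : ℝ, ee (p * t) = Complex.exp ((tPI * p) * t) := by
    intro t; unfold ee; push_cast; ring_nf
  simp_rw [this]
  rw [integral_exp_mul_complex hc]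
  rw [← this δ, Complex.ofReal_zero, mul_zero, Complex.exp_zero]

lemma Gp_zero_left {δ : ℝ} (hδ : 0 ≤ δ) : Gp 0 δ = δ := by
  unfold Gp
  simp [ee_zero, Real.volume_Icc, hδ, ENNReal.toReal_ofReal]

lemma Gp'_closed {p : ℝ} (hp : p ≠ 0) {δ : ℝ} (hδ : 0 ≤ δ) :
    Gp' p δ = (ee p - ee (p * (1 - δ))) / (tPI * p) := by
  have hc : tPI * (p:ℂ) ≠ 0 := mul_ne_zero tPI_ne (by exact_mod_cast hp)
  unfold Gp'
  rw [setInt_Icc_eq_interval (by linarith)]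
  have h2 : ∀ t : ℝ, ee (p * t) = Complex.exp ((tPI * p) * t) := by
    intro t; unfold ee; push_cast; ring_nf
  simp_rw [h2]
  rw [integral_exp_mul_complex hc]
  rw [← h2 (1 - δ), ← h2 1]
  norm_num

lemma Gp'_zero_left {δ : ℝ} (hδ : 0 ≤ δ) (hδ1 : δ ≤ 1) : Gp' 0 δ = δ := by
  unfold Gp'
  simp only [zero_mul, ee_zero, integral_const, MeasureTheory.Measure.restrict_apply_univ,
    Real.volume_Icc, smul_eq_mul, mul_one]
  rw [measureReal_restrict_apply_univ, Real.volume_real_Icc_of_le (by linarith),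
    show (1 : ℝ) - (1 - δ) = δ by ring, Complex.real_smul, mul_one]

lemma Jq_closed {q : ℝ} (hq : q ≠ 0) :
    Jq q = ((tPI * q - 1) * ee q + 1) / (tPI * q)^2 := by
  have hc : tPI * (q:ℂ) ≠ 0 := mul_ne_zero tPI_ne (by exact_mod_cast hq)
  unfold Jq
  rw [setInt_Icc_eq_interval zero_le_one]
  set F : ℝ → ℂ := fun t => (tPI*q*t - 1)/(tPI*q)^2 * Complex.exp (tPI*q*t) with hF
  have hderiv : ∀ t ∈ Set.uIcc (0:ℝ) 1, HasDerivAt F ((t:ℂ) * ee (q * t)) t := by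
    intro t ht
    have h0 : HasDerivAt (fun t:ℝ => (t:ℂ)) 1 t := by
      simpa using (hasDerivAt_id t).ofReal_comp
    have h1 : HasDerivAt (fun t:ℝ => tPI*q * (t:ℂ)) (tPI*q) t := by
      simpa using h0.const_mul (tPI*(q:ℂ))
    have h2 : HasDerivAt (fun t:ℝ => tPI*q * (t:ℂ) - 1) (tPI*q) t := h1.sub_const 1
    have h3 : HasDerivAt (fun t:ℝ => Complex.exp (tPI*q * (t:ℂ)))
        (Complex.exp (tPI*q * t) * (tPI*q)) t := h1.cexp
    have h4 := (h2.div_const ((tPI*q)^2)).mul h3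
    have heq : ee (q * t) = Complex.exp (tPI*q * t) := by unfold ee; push_cast; ring_nf
    have hval : (t:ℂ) * ee (q * t)
        = tPI*q/(tPI*q)^2 * Complex.exp (tPI*q*t)
          + (tPI*q*t - 1)/(tPI*q)^2 * (Complex.exp (tPI*q*t) * (tPI*q)) := by
      have := tPI_ne; have hq' : (q:ℂ) ≠ 0 := by exact_mod_cast hq
      rw [heq]; field_simp; ring
    rw [hval]
    exact h4
  have hint : IntervalIntegrable (fun t : ℝ => (t:ℂ) * ee (q * t)) volume 0 1 := by
    apply Continuous.intervalIntegrable
    have hee : Continuous fun t : ℝ => ee (q * t) := by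
      unfold ee; exact Complex.continuous_exp.comp (by continuity)
    exact (Complex.continuous_ofReal).mul hee
  have key := intervalIntegral.integral_eq_sub_of_hasDerivAt hderiv hint
  rw [key, hF]
  have he : ee q = Complex.exp (tPI * (q:ℂ) * ((1:ℝ):ℂ)) := by unfold ee; norm_num
  simp only [Complex.ofReal_one, Complex.ofReal_zero, mul_zero, mul_one, Complex.exp_zero]
  rw [show tPI * (q:ℂ) * ((1:ℝ):ℂ) = tPI * q by norm_num] at he
  rw [← he]
  field_simp
  ring

lemma conj_c (q : ℝ) : (starRingEnd ℂ) (tPI * q) = -(tPI * q) := by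
  rw [map_mul, conj_tPI, Complex.conj_ofReal]; ring

lemma idb {p δ : ℝ} (h0 : 0 ≤ δ) (h1 : δ ≤ 1) :
    ee (-p) * Gp' p δ = (starRingEnd ℂ) (Gp p δ) := by
  by_cases hp : p = 0
  · subst hp
    rw [Gp'_zero_left h0 h1, Gp_zero_left h0, neg_zero, ee_zero, one_mul, Complex.conj_ofReal]
  · have hc : tPI * (p:ℂ) ≠ 0 := mul_ne_zero tPI_ne (by exact_mod_cast hp)
    rw [Gp'_closed hp h0, Gp_closed hp h0]
    rw [map_div₀, map_sub, map_one, conj_ee, conj_c]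
    have e1 : ee (-p) * ee p = 1 := by rw [mul_comm]; exact ee_mul_ee_neg p
    have e2 : ee (-p) * ee (p * (1 - δ)) = ee (-(p * δ)) := by
      rw [← ee_add]; congr 1; ring
    rw [div_neg, ← neg_div, neg_sub, mul_div_assoc', div_eq_div_iff hc hc]
    linear_combination (tPI * (p:ℂ)) * e1 - (tPI * (p:ℂ)) * e2

lemma idc (q : ℝ) : Jq q * ee (-q) + ee q * (starRingEnd ℂ) (Jq q)
    = Gp q 1 * (starRingEnd ℂ) (Gp q 1) := by
  by_cases hq : q = 0
  · subst hq
    have hJ : Jq 0 = (1:ℂ)/2 := by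
      unfold Jq
      simp only [zero_mul, ee_zero, mul_one]
      rw [setInt_Icc_eq_interval zero_le_one]
      have : ∫ t in (0:ℝ)..1, (t:ℂ) = ((∫ t in (0:ℝ)..1, t : ℝ) : ℂ) := by
        rw [← intervalIntegral.integral_ofReal]
      rw [this, integral_id]
      norm_num
    rw [hJ, Gp_zero_left zero_le_one, neg_zero, ee_zero]
    simp [map_div₀, map_one, map_ofNat, Complex.conj_ofReal]
    norm_num
  · have hc : tPI * (q:ℂ) ≠ 0 := mul_ne_zero tPI_ne (by exact_mod_cast hq)
    rw [Jq_closed hq, Gp_closed hq zero_le_one, mul_one]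
    rw [map_div₀, map_add, map_one, map_mul, map_sub, map_one, conj_ee, conj_c, map_pow, conj_c]
    rw [map_div₀, map_sub, map_one, conj_ee, conj_c]
    have e1 : ee q * ee (-q) = 1 := ee_mul_ee_neg q
    have := tPI_ne; have hq' : (q:ℂ) ≠ 0 := by exact_mod_cast hq
    field_simp
    ring_nf
    linear_combination (-1 : ℂ) * e1

lemma tendsto_nGp (p : ℝ) :
    Tendsto (fun n : ℕ => ((n:ℂ)+2) * Gp p (1/((n:ℝ)+2))) atTop (𝓝 1) := by
  have hne : ∀ n : ℕ, ((n:ℂ)+2) ≠ 0 := by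
    intro n
    have : ((n:ℂ)+2) = ((n+2:ℕ):ℂ) := by push_cast; ring
    rw [this]
    exact Nat.cast_ne_zero.mpr (by omega)
  by_cases hp : p = 0
  · subst hp
    have he : ∀ n : ℕ, ((n:ℂ)+2) * Gp 0 (1/((n:ℝ)+2)) = 1 := by
      intro n
      rw [Gp_zero_left (by positivity)]
      have : ((1/((n:ℝ)+2) : ℝ) : ℂ) = ((n:ℂ)+2)⁻¹ := by push_cast; ring
      rw [this]
      exact mul_inv_cancel₀ (hne n)
    simpa only [he] using (tendsto_const_nhds : Tendsto (fun _ : ℕ => (1:ℂ)) atTop (𝓝 1))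
  · have hc : tPI * (p:ℂ) ≠ 0 := mul_ne_zero tPI_ne (by exact_mod_cast hp)
    set z : ℕ → ℂ := fun n => tPI * p * ((n:ℂ)+2)⁻¹ with hz
    have hz0 : Tendsto z atTop (𝓝 0) := by
      have h1 : Tendsto (fun n : ℕ => ((n:ℂ)+2)⁻¹) atTop (𝓝 0) := by
        rw [tendsto_zero_iff_norm_tendsto_zero]
        have : ∀ n : ℕ, ‖((n:ℂ)+2)⁻¹‖ = ((n:ℝ)+2)⁻¹ := by
          intro n
          rw [norm_inv]
          congr 1
          have : ((n:ℂ)+2) = (((n:ℝ)+2 : ℝ) : ℂ) := by push_cast; ring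
          rw [this, Complex.norm_real, Real.norm_eq_abs, abs_of_pos (by positivity)]
        simp_rw [this]
        exact tendsto_inv_atTop_zero.comp
          (tendsto_atTop_add_const_right atTop 2 tendsto_natCast_atTop_atTop)
      simpa using (h1.const_mul (tPI * (p:ℂ)))
    have hzne : ∀ n, z n ≠ 0 := fun n => mul_ne_zero hc (inv_ne_zero (hne n))
    have hzw : Tendsto z atTop (𝓝[≠] 0) :=
      tendsto_nhdsWithin_of_tendsto_nhds_of_eventually_within _ hz0
        (Filter.Eventually.of_forall fun n => hzne n)
    have hslope : Tendsto (slope Complex.exp 0) (𝓝[≠] (0:ℂ)) (𝓝 1) := by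
      have := hasDerivAt_iff_tendsto_slope.mp (Complex.hasDerivAt_exp 0)
      simpa using this
    have hcomp := hslope.comp hzw
    apply hcomp.congr
    intro n
    show slope Complex.exp 0 (z n) = _
    rw [slope_def_field, Complex.exp_zero]
    have hGp : Gp p (1/((n:ℝ)+2)) = (Complex.exp (z n) - 1) / (tPI * p) := by
      rw [Gp_closed hp (by positivity)]
      congr 2
      unfold ee
      congr 1
      rw [hz]
      push_cast
      field_simp
    rw [hGp, sub_zero]
    rw [show z n = tPI * (p:ℂ) * ((n:ℂ)+2)⁻¹ from rfl]
    field_simp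

lemma fexp_eq {l x : Euc 2} : fexp l x = ee ((inner ℝ l x : ℝ)) := by
  unfold fexp ee tPI; ring_nf

lemma seg_coord (a b c d t : ℝ) (i : Fin 2) :
    (ptE a b + t • ptE c d) i = ![a,b] i + t * ![c,d] i := rfl

lemma inner_pt (l : Euc 2) (a b c d t : ℝ) :
    (inner ℝ l (ptE a b + t • ptE c d) : ℝ) = l 0 * (a + t*c) + l 1 * (b + t*d) := by
  rw [PiLp.inner_apply, Fin.sum_univ_two]
  simp only [RCLike.inner_apply, conj_trivial, seg_coord]
  norm_num [Matrix.cons_val_zero, Matrix.cons_val_one, Matrix.head_cons]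
  ring

lemma continuous_coord (i : Fin 2) : Continuous (fun x : Euc 2 => x i) :=
  (continuous_apply i).comp (PiLp.continuous_ofLp (p := 2) (β := fun _ : Fin 2 => ℝ))

lemma continuous_fexp (l : Euc 2) : Continuous (fexp l) := by
  have h1 : Continuous fun x : Euc 2 => (inner ℝ l x : ℝ) := continuous_const.inner continuous_id
  exact Complex.continuous_exp.comp ((continuous_const.mul (Complex.continuous_ofReal.comp h1)).neg)

lemma continuous_seg (x0 v : Euc 2) : Continuous (fun t : ℝ => x0 + t • v) :=
  continuous_const.add (continuous_id.smul continuous_const)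

instance segMeasure_finite (x0 v : Euc 2) : IsFiniteMeasure (segMeasure x0 v) := by
  constructor
  unfold segMeasure
  rw [Measure.map_apply (continuous_seg x0 v).measurable MeasurableSet.univ]
  simp [Real.volume_Icc]

instance muPi_finite : IsFiniteMeasure muPi := by
  constructor
  unfold muPi
  rw [Measure.smul_apply, Measure.add_apply, Measure.add_apply]
  simp only [smul_eq_mul]
  exact ENNReal.mul_lt_top (by simp) (ENNReal.add_lt_top.mpr
    ⟨ENNReal.add_lt_top.mpr ⟨measure_lt_top _ _, measure_lt_top _ _⟩, measure_lt_top _ _⟩)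

lemma integrable_seg {E : Type*} [NormedAddCommGroup E] [NormedSpace ℝ E]
    (x0 v : Euc 2) (F : Euc 2 → E) (hm : StronglyMeasurable F) (C : ℝ)
    (hC : ∀ x, ‖F x‖ ≤ C) : Integrable F (segMeasure x0 v) :=
  (integrable_const C).mono' hm.aestronglyMeasurable (Filter.Eventually.of_forall hC)

lemma segMeasure_integral {E : Type*} [NormedAddCommGroup E] [NormedSpace ℝ E]
    (x0 v : Euc 2) (F : Euc 2 → E) (hm : StronglyMeasurable F) :
    ∫ x, F x ∂(segMeasure x0 v) = ∫ t in Icc (0:ℝ) 1, F (x0 + t • v) := by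
  unfold segMeasure
  rw [integral_map (continuous_seg x0 v).measurable.aemeasurable hm.aestronglyMeasurable]

lemma integral_muPi {E : Type*} [NormedAddCommGroup E] [NormedSpace ℝ E]
    (F : Euc 2 → E) (hm : StronglyMeasurable F) (C : ℝ) (hC : ∀ x, ‖F x‖ ≤ C) :
    ∫ x, F x ∂muPi = (3:ℝ)⁻¹ • ((∫ t in Icc (0:ℝ) 1, F (ptE 0 0 + t • ptE 0 1))
      + (∫ t in Icc (0:ℝ) 1, F (ptE 0 1 + t • ptE 1 0))
      + (∫ t in Icc (0:ℝ) 1, F (ptE 1 1 + t • ptE 0 (-1)))) := by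
  unfold muPi
  rw [integral_smul_measure]
  rw [integral_add_measure
    ((integrable_seg _ _ F hm C hC).add_measure (integrable_seg _ _ F hm C hC))
    (integrable_seg _ _ F hm C hC)]
  rw [integral_add_measure (integrable_seg _ _ F hm C hC) (integrable_seg _ _ F hm C hC)]
  rw [segMeasure_integral _ _ _ hm, segMeasure_integral _ _ _ hm, segMeasure_integral _ _ _ hm]
  norm_num

/-- test functions -/
def tf5 : Euc 2 → ℂ := fun x => if x 0 = 0 ∧ x 1 ≠ 1 then 1 else 0
def tf1 : Euc 2 → ℂ := fun x => if x 0 = 0 ∧ x 1 ≠ 1 ∧ 0 ≤ x 1 ∧ x 1 ≤ 1 then (x 1 : ℂ) else 0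
def tf2 (δ : ℝ) : Euc 2 → ℂ := fun x => if x 1 = 1 ∧ 0 < x 0 ∧ x 0 ≤ δ then 1 else 0
def tf3 (δ : ℝ) : Euc 2 → ℂ := fun x => if x 1 = 1 ∧ 1-δ ≤ x 0 ∧ x 0 < 1 then 1 else 0
def tf4 : Euc 2 → ℂ := fun x => if x 0 = 1 ∧ x 1 ≠ 1 ∧ 0 ≤ x 1 ∧ x 1 ≤ 1 then (x 1 : ℂ) else 0

lemma meas_coord (i : Fin 2) : Measurable (fun x : Euc 2 => x i) := (continuous_coord i).measurable

lemma meas_tf5 : Measurable tf5 := by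
  unfold tf5
  refine Measurable.ite ?_ measurable_const measurable_const
  have : {x : Euc 2 | x 0 = 0 ∧ x 1 ≠ 1}
      = ((fun x : Euc 2 => x 0) ⁻¹' {0}) ∩ ((fun x : Euc 2 => x 1) ⁻¹' {1})ᶜ := by
    ext x; simp
  rw [this]
  exact ((meas_coord 0) (measurableSet_singleton 0)).inter
    (((meas_coord 1) (measurableSet_singleton 1)).compl)

lemma meas_tf1 : Measurable tf1 := by
  unfold tf1
  refine Measurable.ite ?_ ((Complex.measurable_ofReal).comp (meas_coord 1)) measurable_const
  have : {x : Euc 2 | x 0 = 0 ∧ x 1 ≠ 1 ∧ 0 ≤ x 1 ∧ x 1 ≤ 1}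
      = ((fun x : Euc 2 => x 0) ⁻¹' {0}) ∩ (((fun x : Euc 2 => x 1) ⁻¹' {1})ᶜ
        ∩ (((fun x : Euc 2 => x 1) ⁻¹' Ici 0) ∩ ((fun x : Euc 2 => x 1) ⁻¹' Iic 1))) := by
    ext x; simp [and_assoc]
  rw [this]
  exact ((meas_coord 0) (measurableSet_singleton 0)).inter
    ((((meas_coord 1) (measurableSet_singleton 1)).compl).inter
      (((meas_coord 1) measurableSet_Ici).inter ((meas_coord 1) measurableSet_Iic)))

lemma meas_tf4 : Measurable tf4 := by
  unfold tf4
  refine Measurable.ite ?_ ((Complex.measurable_ofReal).comp (meas_coord 1)) measurable_const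
  have : {x : Euc 2 | x 0 = 1 ∧ x 1 ≠ 1 ∧ 0 ≤ x 1 ∧ x 1 ≤ 1}
      = ((fun x : Euc 2 => x 0) ⁻¹' {1}) ∩ (((fun x : Euc 2 => x 1) ⁻¹' {1})ᶜ
        ∩ (((fun x : Euc 2 => x 1) ⁻¹' Ici 0) ∩ ((fun x : Euc 2 => x 1) ⁻¹' Iic 1))) := by
    ext x; simp [and_assoc]
  rw [this]
  exact ((meas_coord 0) (measurableSet_singleton 1)).inter
    ((((meas_coord 1) (measurableSet_singleton 1)).compl).inter
      (((meas_coord 1) measurableSet_Ici).inter ((meas_coord 1) measurableSet_Iic)))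

lemma meas_tf2 (δ : ℝ) : Measurable (tf2 δ) := by
  unfold tf2
  refine Measurable.ite ?_ measurable_const measurable_const
  have : {x : Euc 2 | x 1 = 1 ∧ 0 < x 0 ∧ x 0 ≤ δ}
      = ((fun x : Euc 2 => x 1) ⁻¹' {1}) ∩ ((fun x : Euc 2 => x 0) ⁻¹' Ioc 0 δ) := by
    ext x; simp [Set.mem_Ioc]
  rw [this]
  exact ((meas_coord 1) (measurableSet_singleton 1)).inter ((meas_coord 0) measurableSet_Ioc)

lemma meas_tf3 (δ : ℝ) : Measurable (tf3 δ) := by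
  unfold tf3
  refine Measurable.ite ?_ measurable_const measurable_const
  have : {x : Euc 2 | x 1 = 1 ∧ 1-δ ≤ x 0 ∧ x 0 < 1}
      = ((fun x : Euc 2 => x 1) ⁻¹' {1}) ∩ ((fun x : Euc 2 => x 0) ⁻¹' Ico (1-δ) 1) := by
    ext x; simp [Set.mem_Ico]
  rw [this]
  exact ((meas_coord 1) (measurableSet_singleton 1)).inter ((meas_coord 0) measurableSet_Ico)

lemma bound_tf5 : ∀ x, ‖tf5 x‖ ≤ 1 := by
  intro x; unfold tf5; split_ifs <;> simp

lemma bound_tf1 : ∀ x, ‖tf1 x‖ ≤ 1 := by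
  intro x; unfold tf1; split_ifs with h
  · rw [Complex.norm_real, Real.norm_eq_abs]
    exact abs_le.mpr ⟨by linarith [h.2.2.1], h.2.2.2⟩
  · simp

lemma bound_tf4 : ∀ x, ‖tf4 x‖ ≤ 1 := by
  intro x; unfold tf4; split_ifs with h
  · rw [Complex.norm_real, Real.norm_eq_abs]
    exact abs_le.mpr ⟨by linarith [h.2.2.1], h.2.2.2⟩
  · simp

lemma bound_tf2 (δ : ℝ) : ∀ x, ‖tf2 δ x‖ ≤ 1 := by
  intro x; unfold tf2; split_ifs <;> simp

lemma bound_tf3 (δ : ℝ) : ∀ x, ‖tf3 δ x‖ ≤ 1 := by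
  intro x; unfold tf3; split_ifs <;> simp

/-- coordinates of the segment parametrizations -/
lemma s1x0 (t : ℝ) : (ptE 0 0 + t • ptE 0 1) 0 = 0 := by rw [seg_coord]; simp
lemma s1x1 (t : ℝ) : (ptE 0 0 + t • ptE 0 1) 1 = t := by rw [seg_coord]; simp
lemma s2x0 (t : ℝ) : (ptE 0 1 + t • ptE 1 0) 0 = t := by rw [seg_coord]; simp
lemma s2x1 (t : ℝ) : (ptE 0 1 + t • ptE 1 0) 1 = 1 := by rw [seg_coord]; simp
lemma s3x0 (t : ℝ) : (ptE 1 1 + t • ptE 0 (-1)) 0 = 1 := by rw [seg_coord]; simp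
lemma s3x1 (t : ℝ) : (ptE 1 1 + t • ptE 0 (-1)) 1 = 1 - t := by rw [seg_coord]; simp; ring

lemma fe1 (l : Euc 2) (t : ℝ) : fexp l (ptE 0 0 + t • ptE 0 1) = ee (l 1 * t) := by
  rw [fexp_eq, inner_pt]; congr 1; ring
lemma fe2 (l : Euc 2) (t : ℝ) : fexp l (ptE 0 1 + t • ptE 1 0) = ee (l 0 * t) * ee (l 1) := by
  rw [fexp_eq, inner_pt, ← ee_add]; congr 1; ring
lemma fe3 (l : Euc 2) (t : ℝ) :
    fexp l (ptE 1 1 + t • ptE 0 (-1)) = ee (l 0) * ee (l 1 * (1 - t)) := by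
  rw [fexp_eq, inner_pt, ← ee_add]; congr 1; ring

lemma setIntegral_congr_off {E : Type*} [NormedAddCommGroup E] [NormedSpace ℝ E]
    {g h : ℝ → E} (c : ℝ) (H : ∀ t ∈ Icc (0:ℝ) 1, t ≠ c → g t = h t) :
    ∫ t in Icc (0:ℝ) 1, g t = ∫ t in Icc (0:ℝ) 1, h t := by
  apply setIntegral_congr_ae measurableSet_Icc
  rw [ae_iff]
  refine measure_mono_null (fun t ht => ?_) (measure_singleton c)
  simp only [Set.mem_setOf_eq] at ht
  push_neg at ht
  simp only [Set.mem_singleton_iff]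
  by_contra hne
  exact ht.2 (H t ht.1 hne)

lemma norm_fexp (l x : Euc 2) : ‖fexp l x‖ = 1 := by rw [fexp_eq]; exact norm_ee _

lemma bound_mul_fexp {f : Euc 2 → ℂ} (hb : ∀ x, ‖f x‖ ≤ 1) (l : Euc 2) :
    ∀ x, ‖f x * fexp l x‖ ≤ 1 := by
  intro x
  rw [norm_mul, norm_fexp, mul_one]
  exact hb x

lemma coef5 (l : Euc 2) :
    ∫ x, tf5 x * fexp l x ∂muPi = (3:ℝ)⁻¹ • Gp (l 1) 1 := by
  rw [integral_muPi (fun x => tf5 x * fexp l x) ((meas_tf5.mul (continuous_fexp l).measurable).stronglyMeasurable) 1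
    (bound_mul_fexp bound_tf5 l)]
  have h1 : (∫ t in Icc (0:ℝ) 1,
      tf5 (ptE 0 0 + t • ptE 0 1) * fexp l (ptE 0 0 + t • ptE 0 1)) = Gp (l 1) 1 := by
    rw [setIntegral_congr_off (c := 1) (h := fun t => ee (l 1 * t)) (fun t ht hne => by
      unfold tf5
      rw [fe1, s1x0, s1x1, if_pos ⟨rfl, hne⟩, one_mul])]
    rfl
  have h2 : (∫ t in Icc (0:ℝ) 1,
      tf5 (ptE 0 1 + t • ptE 1 0) * fexp l (ptE 0 1 + t • ptE 1 0)) = 0 := by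
    rw [setIntegral_congr_off (c := 2) (h := fun _ => (0:ℂ)) (fun t ht hne => by
      unfold tf5
      rw [s2x0, s2x1, if_neg (fun hh => hh.2 rfl), zero_mul])]
    exact integral_zero _ _
  have h3 : (∫ t in Icc (0:ℝ) 1,
      tf5 (ptE 1 1 + t • ptE 0 (-1)) * fexp l (ptE 1 1 + t • ptE 0 (-1))) = 0 := by
    rw [setIntegral_congr_off (c := 2) (h := fun _ => (0:ℂ)) (fun t ht hne => by
      unfold tf5
      rw [s3x0, s3x1, if_neg (fun hh => one_ne_zero hh.1), zero_mul])]
    exact integral_zero _ _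
  rw [h1, h2, h3, add_zero, add_zero]

lemma coef1 (l : Euc 2) :
    ∫ x, tf1 x * fexp l x ∂muPi = (3:ℝ)⁻¹ • Jq (l 1) := by
  rw [integral_muPi (fun x => tf1 x * fexp l x) ((meas_tf1.mul (continuous_fexp l).measurable).stronglyMeasurable) 1
    (bound_mul_fexp bound_tf1 l)]
  have h1 : (∫ t in Icc (0:ℝ) 1,
      tf1 (ptE 0 0 + t • ptE 0 1) * fexp l (ptE 0 0 + t • ptE 0 1)) = Jq (l 1) := by
    rw [setIntegral_congr_off (c := 1) (h := fun t => (t:ℂ) * ee (l 1 * t)) (fun t ht hne => by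
      unfold tf1
      rw [fe1, s1x0, s1x1, if_pos ⟨rfl, hne, ht.1, ht.2⟩])]
    rfl
  have h2 : (∫ t in Icc (0:ℝ) 1,
      tf1 (ptE 0 1 + t • ptE 1 0) * fexp l (ptE 0 1 + t • ptE 1 0)) = 0 := by
    rw [setIntegral_congr_off (c := 2) (h := fun _ => (0:ℂ)) (fun t ht hne => by
      unfold tf1
      rw [s2x0, s2x1, if_neg (fun hh => hh.2.1 rfl), zero_mul])]
    exact integral_zero _ _
  have h3 : (∫ t in Icc (0:ℝ) 1,
      tf1 (ptE 1 1 + t • ptE 0 (-1)) * fexp l (ptE 1 1 + t • ptE 0 (-1))) = 0 := by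
    rw [setIntegral_congr_off (c := 2) (h := fun _ => (0:ℂ)) (fun t ht hne => by
      unfold tf1
      rw [s3x0, s3x1, if_neg (fun hh => one_ne_zero hh.1), zero_mul])]
    exact integral_zero _ _
  rw [h1, h2, h3, add_zero, add_zero]

lemma coef2 (l : Euc 2) {δ : ℝ} (hδ0 : 0 < δ) (hδh : δ ≤ 1/2) :
    ∫ x, tf2 δ x * fexp l x ∂muPi = (3:ℝ)⁻¹ • (Gp (l 0) δ * ee (l 1)) := by
  rw [integral_muPi (fun x => tf2 δ x * fexp l x) (((meas_tf2 δ).mul (continuous_fexp l).measurable).stronglyMeasurable) 1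
    (bound_mul_fexp (bound_tf2 δ) l)]
  have h1 : (∫ t in Icc (0:ℝ) 1,
      tf2 δ (ptE 0 0 + t • ptE 0 1) * fexp l (ptE 0 0 + t • ptE 0 1)) = 0 := by
    rw [setIntegral_congr_off (c := 2) (h := fun _ => (0:ℂ)) (fun t ht hne => by
      unfold tf2
      rw [s1x0, s1x1, if_neg (fun hh => lt_irrefl 0 hh.2.1), zero_mul])]
    exact integral_zero _ _
  have h2 : (∫ t in Icc (0:ℝ) 1,
      tf2 δ (ptE 0 1 + t • ptE 1 0) * fexp l (ptE 0 1 + t • ptE 1 0))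
      = Gp (l 0) δ * ee (l 1) := by
    have hpt : ∀ t : ℝ, tf2 δ (ptE 0 1 + t • ptE 1 0) * fexp l (ptE 0 1 + t • ptE 1 0)
        = Set.indicator (Ioc (0:ℝ) δ) (fun t => ee (l 0 * t) * ee (l 1)) t := by
      intro t
      unfold tf2
      rw [fe2, s2x0, s2x1]
      by_cases h : t ∈ Ioc (0:ℝ) δ
      · rw [Set.indicator_of_mem h,
          if_pos (show (1:ℝ) = 1 ∧ 0 < t ∧ t ≤ δ from ⟨rfl, h.1, h.2⟩), one_mul]
      · rw [Set.indicator_of_notMem h,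
          if_neg (show ¬((1:ℝ) = 1 ∧ 0 < t ∧ t ≤ δ) from fun hh => h ⟨hh.2.1, hh.2.2⟩), zero_mul]
    simp only [hpt]
    have hsub : Ioc (0:ℝ) δ ⊆ Icc 0 1 := fun x hx => by
      rw [Set.mem_Ioc] at hx
      exact Set.mem_Icc.mpr ⟨le_of_lt hx.1, le_trans hx.2 (by linarith)⟩
    rw [integral_indicator measurableSet_Ioc, Measure.restrict_restrict measurableSet_Ioc,
      Set.inter_eq_left.mpr hsub]
    rw [integral_mul_const]
    congr 1
    rw [← integral_Icc_eq_integral_Ioc]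
    rfl
  have h3 : (∫ t in Icc (0:ℝ) 1,
      tf2 δ (ptE 1 1 + t • ptE 0 (-1)) * fexp l (ptE 1 1 + t • ptE 0 (-1))) = 0 := by
    rw [setIntegral_congr_off (c := 2) (h := fun _ => (0:ℂ)) (fun t ht hne => by
      unfold tf2
      rw [s3x0, s3x1, if_neg (fun hh => by linarith [hh.2.2]), zero_mul])]
    exact integral_zero _ _
  rw [h1, h2, h3, zero_add, add_zero]

lemma coef3 (l : Euc 2) {δ : ℝ} (hδ0 : 0 < δ) (hδh : δ ≤ 1/2) :
    ∫ x, tf3 δ x * fexp l x ∂muPi = (3:ℝ)⁻¹ • (Gp' (l 0) δ * ee (l 1)) := by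
  rw [integral_muPi (fun x => tf3 δ x * fexp l x) (((meas_tf3 δ).mul (continuous_fexp l).measurable).stronglyMeasurable) 1
    (bound_mul_fexp (bound_tf3 δ) l)]
  have h1 : (∫ t in Icc (0:ℝ) 1,
      tf3 δ (ptE 0 0 + t • ptE 0 1) * fexp l (ptE 0 0 + t • ptE 0 1)) = 0 := by
    rw [setIntegral_congr_off (c := 2) (h := fun _ => (0:ℂ)) (fun t ht hne => by
      unfold tf3
      rw [s1x0, s1x1, if_neg (fun hh => by linarith [hh.2.1]), zero_mul])]
    exact integral_zero _ _
  have h2 : (∫ t in Icc (0:ℝ) 1,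
      tf3 δ (ptE 0 1 + t • ptE 1 0) * fexp l (ptE 0 1 + t • ptE 1 0))
      = Gp' (l 0) δ * ee (l 1) := by
    have hpt : ∀ t : ℝ, tf3 δ (ptE 0 1 + t • ptE 1 0) * fexp l (ptE 0 1 + t • ptE 1 0)
        = Set.indicator (Ico (1-δ:ℝ) 1) (fun t => ee (l 0 * t) * ee (l 1)) t := by
      intro t
      unfold tf3
      rw [fe2, s2x0, s2x1]
      by_cases h : t ∈ Ico (1-δ:ℝ) 1
      · rw [Set.indicator_of_mem h,
          if_pos (show (1:ℝ) = 1 ∧ 1-δ ≤ t ∧ t < 1 from ⟨rfl, h.1, h.2⟩), one_mul]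
      · rw [Set.indicator_of_notMem h,
          if_neg (show ¬((1:ℝ) = 1 ∧ 1-δ ≤ t ∧ t < 1) from fun hh => h ⟨hh.2.1, hh.2.2⟩), zero_mul]
    simp only [hpt]
    have hsub : Ico (1-δ:ℝ) 1 ⊆ Icc 0 1 := fun x hx => by
      rw [Set.mem_Ico] at hx
      exact Set.mem_Icc.mpr ⟨by linarith [hx.1], le_of_lt hx.2⟩
    rw [integral_indicator measurableSet_Ico, Measure.restrict_restrict measurableSet_Ico,
      Set.inter_eq_left.mpr hsub]
    rw [integral_mul_const]
    congr 1
    rw [← integral_Icc_eq_integral_Ico]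
    rfl
  have h3 : (∫ t in Icc (0:ℝ) 1,
      tf3 δ (ptE 1 1 + t • ptE 0 (-1)) * fexp l (ptE 1 1 + t • ptE 0 (-1))) = 0 := by
    rw [setIntegral_congr_off (c := 2) (h := fun _ => (0:ℂ)) (fun t ht hne => by
      unfold tf3
      rw [s3x0, s3x1, if_neg (fun hh => lt_irrefl 1 hh.2.2), zero_mul])]
    exact integral_zero _ _
  rw [h1, h2, h3, zero_add, add_zero]

lemma coef4 (l : Euc 2) :
    ∫ x, tf4 x * fexp l x ∂muPi = (3:ℝ)⁻¹ • (ee (l 0) * Jq (l 1)) := by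
  rw [integral_muPi (fun x => tf4 x * fexp l x) ((meas_tf4.mul (continuous_fexp l).measurable).stronglyMeasurable) 1
    (bound_mul_fexp bound_tf4 l)]
  have h1 : (∫ t in Icc (0:ℝ) 1,
      tf4 (ptE 0 0 + t • ptE 0 1) * fexp l (ptE 0 0 + t • ptE 0 1)) = 0 := by
    rw [setIntegral_congr_off (c := 2) (h := fun _ => (0:ℂ)) (fun t ht hne => by
      unfold tf4
      rw [s1x0, s1x1, if_neg (fun hh => zero_ne_one hh.1), zero_mul])]
    exact integral_zero _ _
  have h2 : (∫ t in Icc (0:ℝ) 1,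
      tf4 (ptE 0 1 + t • ptE 1 0) * fexp l (ptE 0 1 + t • ptE 1 0)) = 0 := by
    rw [setIntegral_congr_off (c := 2) (h := fun _ => (0:ℂ)) (fun t ht hne => by
      unfold tf4
      rw [s2x0, s2x1, if_neg (fun hh => hh.2.1 rfl), zero_mul])]
    exact integral_zero _ _
  have h3 : (∫ t in Icc (0:ℝ) 1,
      tf4 (ptE 1 1 + t • ptE 0 (-1)) * fexp l (ptE 1 1 + t • ptE 0 (-1)))
      = ee (l 0) * Jq (l 1) := by
    rw [setIntegral_congr_off (c := 0)
      (h := fun t => ee (l 0) * (((1-t:ℝ):ℂ) * ee (l 1 * (1-t)))) (fun t ht hne => by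
        unfold tf4
        rw [fe3, s3x0, s3x1,
          if_pos (show (1:ℝ) = 1 ∧ (1-t ≠ 1) ∧ 0 ≤ 1-t ∧ 1-t ≤ 1 from
            ⟨rfl, fun hh => hne (by linarith), by linarith [ht.2], by linarith [ht.1]⟩)]
        ring)]
    rw [integral_const_mul]
    congr 1
    unfold Jq
    rw [setInt_Icc_eq_interval zero_le_one, setInt_Icc_eq_interval zero_le_one]
    have := intervalIntegral.integral_comp_sub_left (a := (0:ℝ)) (b := 1)
      (fun s : ℝ => ((s:ℝ):ℂ) * ee (l 1 * s)) 1
    simpa using this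
  rw [h1, h2, h3, zero_add, zero_add]

lemma normsq5 : ∫ x, ‖tf5 x‖^2 ∂muPi = (3:ℝ)⁻¹ := by
  rw [integral_muPi (fun x => ‖tf5 x‖^2) ((meas_tf5.norm.pow_const 2).stronglyMeasurable) 1
    (fun x => by
      rw [Real.norm_eq_abs, abs_of_nonneg (by positivity)]
      exact pow_le_one₀ (norm_nonneg _) (bound_tf5 x))]
  have h1 : (∫ t in Icc (0:ℝ) 1, ‖tf5 (ptE 0 0 + t • ptE 0 1)‖^2) = 1 := by
    rw [setIntegral_congr_off (c := 1) (h := fun _ => (1:ℝ)) (fun t ht hne => by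
      unfold tf5
      rw [s1x0, s1x1, if_pos ⟨rfl, hne⟩]
      simp)]
    simp [Real.volume_Icc]
  have h2 : (∫ t in Icc (0:ℝ) 1, ‖tf5 (ptE 0 1 + t • ptE 1 0)‖^2) = 0 := by
    rw [setIntegral_congr_off (c := 2) (h := fun _ => (0:ℝ)) (fun t ht hne => by
      unfold tf5
      rw [s2x0, s2x1, if_neg (fun hh => hh.2 rfl)]
      simp)]
    exact integral_zero _ _
  have h3 : (∫ t in Icc (0:ℝ) 1, ‖tf5 (ptE 1 1 + t • ptE 0 (-1))‖^2) = 0 := by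
    rw [setIntegral_congr_off (c := 2) (h := fun _ => (0:ℝ)) (fun t ht hne => by
      unfold tf5
      rw [s3x0, s3x1, if_neg (fun hh => one_ne_zero hh.1)]
      simp)]
    exact integral_zero _ _
  rw [h1, h2, h3, add_zero, add_zero, smul_eq_mul, mul_one]

lemma memLp_muPi {f : Euc 2 → ℂ} (hm : Measurable f) (C : ℝ) (hb : ∀ x, ‖f x‖ ≤ C) :
    MemLp f 2 muPi :=
  MemLp.of_bound hm.aestronglyMeasurable C (Filter.Eventually.of_forall hb)

lemma integrable_mul_fexp {f : Euc 2 → ℂ} (hm : Measurable f) (C : ℝ) (hb : ∀ x, ‖f x‖ ≤ C)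
    (l : Euc 2) : Integrable (fun x => f x * fexp l x) muPi := by
  refine (integrable_const C).mono'
    ((hm.mul (continuous_fexp l).measurable).aestronglyMeasurable)
    (Filter.Eventually.of_forall fun x => ?_)
  rw [norm_mul, norm_fexp, mul_one]
  exact hb x

section frame

variable {Λ : Set (Euc 2)} {A : ℝ}

lemma diag_hasSum (hA : 0 < A)
    (hid : ∀ f : Euc 2 → ℂ, MemLp f 2 muPi →
      ∑' l : Λ, ‖∫ x, f x * fexp (l : Euc 2) x ∂muPi‖ ^ 2 = A * ∫ x, ‖f x‖ ^ 2 ∂muPi)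
    {f : Euc 2 → ℂ} (hm : Measurable f) (C : ℝ) (hb : ∀ x, ‖f x‖ ≤ C) :
    HasSum (fun l : Λ => ‖∫ x, f x * fexp (l : Euc 2) x ∂muPi‖ ^ 2)
      (A * ∫ x, ‖f x‖ ^ 2 ∂muPi) := by
  have key := hid f (memLp_muPi hm C hb)
  by_cases hz : (∫ x, ‖f x‖ ^ 2 ∂muPi) = 0
  · have hint : Integrable (fun x => ‖f x‖^2) muPi := by
      have h2 := (memLp_muPi hm C hb).integrable_norm_rpow (by norm_num) (by norm_num)
      have heq : (fun x => ‖f x‖ ^ ((2:ℝ≥0∞).toReal)) = fun x => ‖f x‖^2 := by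
        funext x
        rw [ENNReal.toReal_ofNat, show ((2:ℝ)) = ((2:ℕ):ℝ) by norm_num, Real.rpow_natCast]
      rwa [heq] at h2
    have hae : (fun x => ‖f x‖^2) =ᵐ[muPi] 0 :=
      (integral_eq_zero_iff_of_nonneg (fun x => sq_nonneg _) hint).mp hz
    have hfae : f =ᵐ[muPi] 0 := hae.mono (fun x hx => by
      simp only [Pi.zero_apply] at hx ⊢
      have : ‖f x‖ = 0 := by
        have := pow_eq_zero_iff (n := 2) (by norm_num) |>.mp hx
        exact this
      rwa [norm_eq_zero] at this)
    have hcoef : ∀ l : Λ, (∫ x, f x * fexp (l : Euc 2) x ∂muPi) = 0 := fun l => by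
      have hae2 : (fun x => f x * fexp (l : Euc 2) x) =ᵐ[muPi] (fun _ => (0:ℂ)) :=
        hfae.mono fun x hx => by
          rw [Pi.zero_apply] at hx
          show f x * fexp (l : Euc 2) x = 0
          rw [hx, zero_mul]
      rw [integral_congr_ae hae2, integral_zero]
    rw [hz, mul_zero]
    refine (hasSum_zero).congr_fun fun l => ?_
    rw [hcoef l]
    simp
  · have hVne : A * ∫ x, ‖f x‖ ^ 2 ∂muPi ≠ 0 := mul_ne_zero (ne_of_gt hA) hz
    have hs : Summable (fun l : Λ => ‖∫ x, f x * fexp (l : Euc 2) x ∂muPi‖^2) := by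
      by_contra hns
      rw [tsum_eq_zero_of_not_summable hns] at key
      exact hVne key.symm
    rw [← key]
    exact hs.hasSum

lemma polar (a b : ℂ) : a * (starRingEnd ℂ) b
    = (((‖a+b‖^2 - ‖a-b‖^2 : ℝ) : ℂ)
        + ((‖a+Complex.I*b‖^2 - ‖a-Complex.I*b‖^2 : ℝ) : ℂ) * Complex.I) / 4 := by
  have h : ∀ z : ℂ, (‖z‖^2 : ℝ) = Complex.normSq z := fun z => by
    rw [Complex.sq_norm]
  simp only [h]
  apply Complex.ext <;>
    simp [Complex.normSq_apply, Complex.mul_re, Complex.mul_im, Complex.add_re, Complex.add_im,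
      Complex.sub_re, Complex.sub_im, Complex.ofReal_sub, Complex.div_re, Complex.div_im,
      Complex.normSq_ofNat] <;>
    ring

lemma cross_hasSum (hA : 0 < A)
    (hid : ∀ f : Euc 2 → ℂ, MemLp f 2 muPi →
      ∑' l : Λ, ‖∫ x, f x * fexp (l : Euc 2) x ∂muPi‖ ^ 2 = A * ∫ x, ‖f x‖ ^ 2 ∂muPi)
    {f g : Euc 2 → ℂ} (hmf : Measurable f) (hbf : ∀ x, ‖f x‖ ≤ 1)
    (hmg : Measurable g) (hbg : ∀ x, ‖g x‖ ≤ 1)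
    (hdisj : ∀ x, f x = 0 ∨ g x = 0) :
    HasSum (fun l : Λ => (∫ x, f x * fexp (l : Euc 2) x ∂muPi)
      * (starRingEnd ℂ) (∫ x, g x * fexp (l : Euc 2) x ∂muPi)) 0 := by
  set a : Λ → ℂ := fun l => ∫ x, f x * fexp (l : Euc 2) x ∂muPi with ha
  set b : Λ → ℂ := fun l => ∫ x, g x * fexp (l : Euc 2) x ∂muPi with hb
  set V : ℝ := A * ∫ x, (‖f x‖ ^ 2 + ‖g x‖^2) ∂muPi with hV
  have hlin : ∀ (c : ℂ) (l : Λ), (∫ x, (f x + c * g x) * fexp (l : Euc 2) x ∂muPi)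
      = a l + c * b l := by
    intro c l
    have h1 : (fun x => (f x + c * g x) * fexp (l : Euc 2) x)
        = fun x => f x * fexp (l : Euc 2) x + c * (g x * fexp (l : Euc 2) x) := by
      funext x; ring
    rw [h1, integral_add (integrable_mul_fexp hmf 1 hbf _)
      ((integrable_mul_fexp hmg 1 hbg _).const_mul c), integral_const_mul]
  have hptw : ∀ (c : ℂ), ‖c‖ = 1 → ∀ x, ‖f x + c * g x‖^2 = ‖f x‖^2 + ‖g x‖^2 := by
    intro c hc x
    rcases hdisj x with h | h <;> rw [h] <;>
      simp [norm_mul, hc]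
  have hdiag : ∀ (c : ℂ), ‖c‖ = 1 →
      HasSum (fun l : Λ => ‖a l + c * b l‖^2) V := by
    intro c hc
    have hmc : Measurable (fun x => f x + c * g x) := hmf.add (hmg.const_mul c)
    have hbc : ∀ x, ‖f x + c * g x‖ ≤ 2 := fun x => by
      calc ‖f x + c * g x‖ ≤ ‖f x‖ + ‖c * g x‖ := norm_add_le _ _
      _ ≤ 1 + 1 := add_le_add (hbf x) (by rw [norm_mul, hc, one_mul]; exact hbg x)
      _ = 2 := by norm_num
    have hd := diag_hasSum hA hid hmc 2 hbc
    have hval : (∫ x, ‖f x + c * g x‖ ^ 2 ∂muPi) = ∫ x, (‖f x‖ ^ 2 + ‖g x‖^2) ∂muPi :=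
      integral_congr_ae (Filter.Eventually.of_forall (hptw c hc))
    rw [hval] at hd
    refine hd.congr_fun fun l => ?_
    rw [hlin c l]
  have d1 := hdiag 1 (by simp)
  have d2 := hdiag (-1) (by simp)
  have d3 := hdiag Complex.I (by simp)
  have d4 := hdiag (-Complex.I) (by simp)
  have h12 : HasSum (fun l : Λ => (‖a l + b l‖^2 - ‖a l - b l‖^2 : ℝ)) 0 := by
    have := d1.sub d2
    rw [sub_self] at this
    refine this.congr_fun fun l => ?_
    rw [one_mul]
    congr 2
    rw [neg_one_mul, sub_eq_add_neg]
  have h34 : HasSum (fun l : Λ => (‖a l + Complex.I * b l‖^2 - ‖a l - Complex.I * b l‖^2 : ℝ)) 0 := by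
    have := d3.sub d4
    rw [sub_self] at this
    refine this.congr_fun fun l => ?_
    congr 2
    rw [neg_mul, sub_eq_add_neg]
  have h12c := Complex.hasSum_ofReal.mpr h12
  rw [Complex.ofReal_zero] at h12c
  have h34c := (Complex.hasSum_ofReal.mpr h34).mul_right Complex.I
  rw [Complex.ofReal_zero, zero_mul] at h34c
  have htot := (h12c.add h34c).div_const 4
  rw [add_zero, zero_div] at htot
  refine htot.congr_fun fun l => ?_
  exact polar (a l) (b l)

end frame

lemma scalar_key (p q : ℝ) {δ : ℝ} (h0 : 0 ≤ δ) (h1 : δ ≤ 1) :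
    (9:ℂ) * (((3:ℝ)⁻¹ • Jq q) * (starRingEnd ℂ) ((3:ℝ)⁻¹ • (Gp p δ * ee q))
      + ((3:ℝ)⁻¹ • (Gp' p δ * ee q)) * (starRingEnd ℂ) ((3:ℝ)⁻¹ • (ee p * Jq q)))
    = (starRingEnd ℂ) (Gp p δ) * (Gp q 1 * (starRingEnd ℂ) (Gp q 1)) := by
  have hb := idb (p := p) h0 h1
  have hc := idc q
  simp only [Complex.real_smul, Complex.ofReal_inv, map_mul, conj_ee, Complex.conj_ofReal,
    map_inv₀, Complex.ofReal_ofNat, map_ofNat]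
  linear_combination (ee q * (starRingEnd ℂ) (Jq q)) * hb + (starRingEnd ℂ) (Gp p δ) * hc

lemma norm_Gp_le (p : ℝ) {δ : ℝ} (h0 : 0 ≤ δ) : ‖Gp p δ‖ ≤ δ := by
  unfold Gp
  have hle : ∀ᵐ t ∂(volume.restrict (Icc (0:ℝ) δ)), ‖ee (p*t)‖ ≤ 1 :=
    Filter.Eventually.of_forall fun t => le_of_eq (norm_ee _)
  have := norm_integral_le_of_norm_le_const (μ := volume.restrict (Icc (0:ℝ) δ))
    (f := fun t : ℝ => ee (p*t)) (C := 1) hle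
  simp [Real.volume_Icc, ENNReal.toReal_ofReal h0] at this
  rcases this with h | h
  · exact h
  · rw [h, norm_zero]; exact h0

lemma disj12 (δ : ℝ) : ∀ x, tf1 x = 0 ∨ tf2 δ x = 0 := by
  intro x
  by_cases h : x 0 = 0 ∧ x 1 ≠ 1 ∧ 0 ≤ x 1 ∧ x 1 ≤ 1
  · right
    unfold tf2
    rw [if_neg (fun hh => by rw [h.1] at hh; exact lt_irrefl 0 hh.2.1)]
  · left
    unfold tf1
    rw [if_neg h]

lemma disj34 (δ : ℝ) : ∀ x, tf3 δ x = 0 ∨ tf4 x = 0 := by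
  intro x
  by_cases h : x 1 = 1
  · right
    unfold tf4
    rw [if_neg (fun hh => hh.2.1 h)]
  · left
    unfold tf3
    rw [if_neg (fun hh => h hh.1)]

theorem muPi_not_TFS : ¬ TightFrameSpectral muPi := by
  rintro ⟨Λ, A, hcount, hA, hid⟩
  -- diagonal identity for tf5
  have diag5 := diag_hasSum hA hid meas_tf5 1 bound_tf5
  rw [normsq5] at diag5
  simp only [coef5] at diag5
  have diag5' : HasSum (fun l : Λ => ‖Gp ((l : Euc 2) 1) 1‖^2) (3*A) := by
    have h9 := diag5.mul_left 9
    rw [show (9:ℝ) * (A * 3⁻¹) = 3*A by ring] at h9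
    refine h9.congr_fun fun l => ?_
    rw [norm_smul, Real.norm_eq_abs, abs_of_nonneg (by norm_num : (0:ℝ) ≤ 3⁻¹)]
    ring
  -- the key vanishing sums
  have key : ∀ n : ℕ, HasSum (fun l : Λ =>
      ((n:ℂ)+2) * ((starRingEnd ℂ) (Gp ((l:Euc 2) 0) (1/((n:ℝ)+2)))
        * (Gp ((l:Euc 2) 1) 1 * (starRingEnd ℂ) (Gp ((l:Euc 2) 1) 1)))) 0 := by
    intro n
    have hδ0 : (0:ℝ) < 1/((n:ℝ)+2) := by positivity
    have hδh : (1:ℝ)/((n:ℝ)+2) ≤ 1/2 := by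
      rw [div_le_div_iff₀ (by positivity) (by norm_num)]
      have : (0:ℝ) ≤ (n:ℝ) := Nat.cast_nonneg n
      linarith
    have hδ1 : (1:ℝ)/((n:ℝ)+2) ≤ 1 := le_trans hδh (by norm_num)
    have X1 := cross_hasSum hA hid meas_tf1 bound_tf1 (meas_tf2 (1/((n:ℝ)+2)))
      (bound_tf2 _) (disj12 _)
    have X2 := cross_hasSum hA hid (meas_tf3 (1/((n:ℝ)+2))) (bound_tf3 _)
      meas_tf4 bound_tf4 (disj34 _)
    simp only [coef1, coef2 _ hδ0 hδh, coef3 _ hδ0 hδh, coef4] at X1 X2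
    have hsum := (X1.add X2).mul_left 9
    rw [add_zero, mul_zero] at hsum
    have htot := hsum.mul_left ((n:ℂ)+2)
    rw [mul_zero] at htot
    refine htot.congr_fun fun l => ?_
    congr 1
    exact (scalar_key ((l:Euc 2) 0) ((l:Euc 2) 1) (le_of_lt hδ0) hδ1).symm
  -- domination
  have hbound : ∀ n : ℕ, ∀ l : Λ, ‖((n:ℂ)+2) * ((starRingEnd ℂ) (Gp ((l:Euc 2) 0) (1/((n:ℝ)+2)))
      * (Gp ((l:Euc 2) 1) 1 * (starRingEnd ℂ) (Gp ((l:Euc 2) 1) 1)))‖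
      ≤ ‖Gp ((l:Euc 2) 1) 1‖^2 := by
    intro n l
    rw [norm_mul, norm_mul, norm_mul, RCLike.norm_conj, RCLike.norm_conj]
    have h1 : ‖((n:ℂ)+2)‖ = (n:ℝ)+2 := by
      rw [show ((n:ℂ)+2) = (((n:ℝ)+2 : ℝ):ℂ) by push_cast; ring, Complex.norm_real,
        Real.norm_eq_abs, abs_of_pos (by positivity)]
    rw [h1]
    have h2 := norm_Gp_le ((l:Euc 2) 0) (le_of_lt (by positivity : (0:ℝ) < 1/((n:ℝ)+2)))
    have h3 : ‖Gp ((l:Euc 2) 0) (1/((n:ℝ)+2))‖ * (‖Gp ((l:Euc 2) 1) 1‖ * ‖Gp ((l:Euc 2) 1) 1‖)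
        ≤ (1/((n:ℝ)+2)) * (‖Gp ((l:Euc 2) 1) 1‖ * ‖Gp ((l:Euc 2) 1) 1‖) :=
      mul_le_mul_of_nonneg_right h2 (by positivity)
    calc ((n:ℝ)+2) * (‖Gp ((l:Euc 2) 0) (1/((n:ℝ)+2))‖
          * (‖Gp ((l:Euc 2) 1) 1‖ * ‖Gp ((l:Euc 2) 1) 1‖))
        ≤ ((n:ℝ)+2) * ((1/((n:ℝ)+2)) * (‖Gp ((l:Euc 2) 1) 1‖ * ‖Gp ((l:Euc 2) 1) 1‖)) :=
          mul_le_mul_of_nonneg_left h3 (by positivity)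
      _ = ‖Gp ((l:Euc 2) 1) 1‖^2 := by
          field_simp
  -- pointwise limits
  have hab : ∀ l : Λ, Tendsto (fun n : ℕ => ((n:ℂ)+2)
      * ((starRingEnd ℂ) (Gp ((l:Euc 2) 0) (1/((n:ℝ)+2)))
        * (Gp ((l:Euc 2) 1) 1 * (starRingEnd ℂ) (Gp ((l:Euc 2) 1) 1)))) atTop
      (𝓝 (Gp ((l:Euc 2) 1) 1 * (starRingEnd ℂ) (Gp ((l:Euc 2) 1) 1))) := by
    intro l
    have h1 := tendsto_nGp ((l:Euc 2) 0)
    have h2 : Tendsto (fun n : ℕ => (starRingEnd ℂ)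
        (((n:ℂ)+2) * Gp ((l:Euc 2) 0) (1/((n:ℝ)+2)))) atTop (𝓝 ((starRingEnd ℂ) 1)) :=
      (Complex.continuous_conj.tendsto _).comp h1
    rw [map_one] at h2
    have h3 := h2.mul_const (Gp ((l:Euc 2) 1) 1 * (starRingEnd ℂ) (Gp ((l:Euc 2) 1) 1))
    rw [one_mul] at h3
    refine h3.congr fun n => ?_
    rw [map_mul, show (starRingEnd ℂ) ((n:ℂ)+2) = (n:ℂ)+2 by
      rw [map_add, map_natCast, map_ofNat]]
    ring
  -- dominated convergence for sums
  have hlim := tendsto_tsum_of_dominated_convergence diag5'.summable hab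
    (Filter.Eventually.of_forall hbound)
  have hzero : (fun n : ℕ => ∑' l : Λ, ((n:ℂ)+2)
      * ((starRingEnd ℂ) (Gp ((l:Euc 2) 0) (1/((n:ℝ)+2)))
        * (Gp ((l:Euc 2) 1) 1 * (starRingEnd ℂ) (Gp ((l:Euc 2) 1) 1)))) = fun _ => (0:ℂ) :=
    funext fun n => (key n).tsum_eq
  rw [hzero] at hlim
  have huniq : (∑' l : Λ, (Gp ((l:Euc 2) 1) 1 * (starRingEnd ℂ) (Gp ((l:Euc 2) 1) 1))) = 0 :=
    tendsto_nhds_unique tendsto_const_nhds hlim |>.symm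
  have hc : HasSum (fun l : Λ => Gp ((l:Euc 2) 1) 1 * (starRingEnd ℂ) (Gp ((l:Euc 2) 1) 1))
      ((3*A : ℝ) : ℂ) := by
    have hcoe := Complex.hasSum_ofReal.mpr diag5'
    refine hcoe.congr_fun fun l => ?_
    rw [Complex.mul_conj, Complex.normSq_eq_norm_sq]
  have hzero2 : ((3*A : ℝ) : ℂ) = 0 := hc.tsum_eq ▸ huniq
  have : (3*A : ℝ) = 0 := by exact_mod_cast hzero2
  linarith


/-- The normalized arc-length measure on the Π-shape, the polygonal line joining
`(0,0)` to `(0,1)` to `(1,1)` to `(1,0)`, is not tight-frame spectral. -/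
theorem pi_shape_not_tight_frame_spectral :
    ¬ TightFrameSpectral
      ((3 : ℝ≥0∞)⁻¹ •
        (segMeasure (ptE 0 0) (ptE 0 1) + segMeasure (ptE 0 1) (ptE 1 0) +
          segMeasure (ptE 1 1) (ptE 0 (-1)))) := by
  have h : ((3 : ℝ≥0∞)⁻¹ • (segMeasure (ptE 0 0) (ptE 0 1) + segMeasure (ptE 0 1) (ptE 1 0) +
      segMeasure (ptE 1 1) (ptE 0 (-1)))) = muPi := rfl
  rw [h]
  exact muPi_not_TFS
end
end
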